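/- Let V be a finite-dimensional vector space over a field F, let A ∈ End(V) be diagonalizable with eigenvalues θ_0,...,θ_d and corresponding primitive idempotents E_0,...,E_d (projections onto the eigenspaces). Let B ∈ End(V) satisfy A^3 B - [3]_q A^2 B A + [3]_q A B A^2 - B A^3 = (q^2-q^{-2})^2 (BA - AB), where [3]_q = q^2 + q^{-2} + 1. Then for all 0 ≤ i, j ≤ d: E_i B E_j (θ_i - θ_j) P(θ_i, θ_j) = 0, where P(x,y) = x^2 - (q^2+q^{-2})xy + y^2 + (q^2-q^{-2})^2. -/
import Mathlib


theorem stmt_7 {F : Type*} [Field F] (q : F) (hq : q ≠ 0)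
    {V : Type*} [AddCommGroup V] [Module F V] [FiniteDimensional F V]
    (d : ℕ) (θ : Fin (d + 1) → F)
    (A B : Module.End F V) (E : Fin (d + 1) → Module.End F V)
    (hEE : ∀ i j, E i * E j = if i = j then E i else 0)
    (hsum : ∑ i, E i = 1)
    (hAE : ∀ i, A * E i = θ i • E i)
    (hEA : ∀ i, E i * A = θ i • E i)
    (hDG : A^3 * B - (q^2 + q⁻¹^2 + 1) • (A^2 * B * A) + (q^2 + q⁻¹^2 + 1) • (A * B * A^2)
           - B * A^3 = (q^2 - q⁻¹^2)^2 • (B * A - A * B))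
    (i j : Fin (d + 1)) :
    ((θ i - θ j) * ((θ i)^2 - (q^2 + q⁻¹^2) * θ i * θ j + (θ j)^2 + (q^2 - q⁻¹^2)^2))
      • (E i * B * E j) = 0 := by
  set s : F := q^2 + q⁻¹^2 + 1 with hs
  set e : F := (q^2 - q⁻¹^2)^2 with he
  set c : Module.End F V := E i * B * E j with hc
  have eAn : ∀ n : ℕ, E i * A ^ n = (θ i ^ n) • E i := by
    intro n
    induction n with
    | zero => simp
    | succ n ih =>
        rw [pow_succ, ← mul_assoc, ih, smul_mul_assoc, hEA i, smul_smul, pow_succ]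
  have Aen : ∀ n : ℕ, A ^ n * E j = (θ j ^ n) • E j := by
    intro n
    induction n with
    | zero => simp
    | succ n ih =>
        rw [pow_succ, mul_assoc, hAE j, mul_smul_comm, ih, smul_smul, pow_succ,
          mul_comm (θ j ^ n)]
  have h := congrArg (fun X => E i * X * E j) hDG
  simp only [mul_sub, sub_mul, mul_add, add_mul, mul_smul_comm, smul_mul_assoc] at h
  have t1 : E i * (A ^ 3 * B) * E j = (θ i ^ 3) • c := by
    rw [← mul_assoc, eAn 3, smul_mul_assoc, smul_mul_assoc]
  have t2 : E i * (A ^ 2 * B * A) * E j = (θ i ^ 2 * θ j) • c := by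
    have h2 : E i * (A ^ 2 * B * A) * E j = (E i * A ^ 2) * B * (A * E j) := by
      noncomm_ring
    rw [h2, eAn 2, hAE j, smul_mul_assoc, smul_mul_assoc, mul_smul_comm, smul_smul]
  have t3 : E i * (A * B * A ^ 2) * E j = (θ i * θ j ^ 2) • c := by
    have h3 : E i * (A * B * A ^ 2) * E j = (E i * A) * B * (A ^ 2 * E j) := by
      noncomm_ring
    rw [h3, hEA i, Aen 2, smul_mul_assoc, smul_mul_assoc, mul_smul_comm, smul_smul]
  have t4 : E i * (B * A ^ 3) * E j = (θ j ^ 3) • c := by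
    have h4 : E i * (B * A ^ 3) * E j = E i * B * (A ^ 3 * E j) := by noncomm_ring
    rw [h4, Aen 3, mul_smul_comm]
  have t5 : E i * (B * A) * E j = (θ j) • c := by
    have h5 : E i * (B * A) * E j = E i * B * (A * E j) := by noncomm_ring
    rw [h5, hAE j, mul_smul_comm]
  have t6 : E i * (A * B) * E j = (θ i) • c := by
    have h6 : E i * (A * B) * E j = (E i * A) * B * E j := by noncomm_ring
    rw [h6, hEA i, smul_mul_assoc, smul_mul_assoc]
  rw [t1, t2, t3, t4, t5, t6] at h
  rw [smul_sub] at h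
  rw [smul_smul, smul_smul, smul_smul, smul_smul] at h
  rw [← sub_smul, ← add_smul, ← sub_smul, ← sub_smul] at h
  have key : (θ i - θ j) * ((θ i)^2 - (q^2 + q⁻¹^2) * θ i * θ j + (θ j)^2 + e)
      = (θ i ^ 3 - s * (θ i ^ 2 * θ j) + s * (θ i * θ j ^ 2) - θ j ^ 3)
        - (e * θ j - e * θ i) := by
    rw [hs, he]; ring
  rw [key, sub_smul, h, sub_self]
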